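/- The map (x,y) ↦ ab - ax - by is a bijection from the set {(x,y) ∈ ℤ≥1 × ℤ≥1 : ab - ax - by > 0} to the set of gaps of the numerical semigroup generated by a and b (i.e., positive integers not representable as a nonnegative integer combination of a and b). -/
import Mathlib


/-- The map (x,y) ↦ ab - ax - by is a bijection from
{(x,y) ∈ ℤ≥1² : ab - ax - by > 0} to the gap set of ⟨a,b⟩. -/
theorem stmt0 (a b : ℤ) (ha : 1 < a) (hab : a < b) (hcop : IsCoprime a b) :
    Set.BijOn (fun p : ℤ × ℤ => a * b - a * p.1 - b * p.2)
      {p : ℤ × ℤ | 1 ≤ p.1 ∧ 1 ≤ p.2 ∧ 0 < a * b - a * p.1 - b * p.2}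
      {m : ℤ | 0 < m ∧ ¬∃ x y : ℕ, m = (x : ℤ) * a + (y : ℤ) * b} := by
  have ha0 : (0:ℤ) < a := by linarith
  have hb0 : (0:ℤ) < b := by linarith
  obtain ⟨u, v, huv⟩ := id hcop
  refine ⟨?_, ?_, ?_⟩
  · -- MapsTo
    rintro ⟨x, y⟩ ⟨hx, hy, hpos⟩
    refine ⟨hpos, ?_⟩
    rintro ⟨p, q, hpq⟩
    simp only at hpq hpos
    have hdb : b ∣ (x + (p:ℤ)) := by
      have hco : IsCoprime b a := ⟨v, u, by linarith⟩
      refine hco.dvd_of_dvd_mul_right ⟨a - y - q, ?_⟩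
      linear_combination (-1 : ℤ) * hpq
    have hda : a ∣ (y + (q:ℤ)) := by
      refine hcop.dvd_of_dvd_mul_right ⟨b - x - p, ?_⟩
      linear_combination (-1 : ℤ) * hpq
    have hxp : (0:ℤ) < x + p := by positivity
    have hyq : (0:ℤ) < y + q := by positivity
    have h1 : b ≤ x + (p:ℤ) := Int.le_of_dvd hxp hdb
    have h2 : a ≤ y + (q:ℤ) := Int.le_of_dvd hyq hda
    nlinarith [mul_le_mul_of_nonneg_left h1 ha0.le, mul_le_mul_of_nonneg_left h2 hb0.le]
  · -- InjOn
    rintro ⟨x1, y1⟩ ⟨hx1, hy1, hp1⟩ ⟨x2, y2⟩ ⟨hx2, hy2, hp2⟩ heq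
    simp only at heq hp1 hp2 hx1 hy1 hx2 hy2
    have bx1 : x1 < b := by nlinarith
    have bx2 : x2 < b := by nlinarith
    have hdb : b ∣ (x1 - x2) := by
      have hco : IsCoprime b a := ⟨v, u, by linarith⟩
      refine hco.dvd_of_dvd_mul_right ⟨y2 - y1, ?_⟩
      linear_combination -heq
    have hx12 : x1 = x2 := by
      by_contra hne
      have h1 : b ≤ |x1 - x2| :=
        Int.le_of_dvd (abs_pos.mpr (sub_ne_zero.mpr hne)) ((dvd_abs _ _).mpr hdb)
      have h2 : |x1 - x2| < b := abs_lt.mpr ⟨by linarith, by linarith⟩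
      linarith
    have hy12 : y1 = y2 := by
      subst hx12
      have : b * y1 = b * y2 := by linarith
      exact mul_left_cancel₀ (by linarith) this
    simp [Prod.ext_iff, hx12, hy12]
  · -- SurjOn
    rintro m ⟨hm, hrep⟩
    set y : ℤ := (-m * v) % a with hy_def
    have hy0 : 0 ≤ y := Int.emod_nonneg _ (by linarith)
    have hylt : y < a := Int.emod_lt_of_pos _ ha0
    have hdvd : a ∣ m + b * y := by
      refine ⟨m * u - b * ((-m * v) / a), ?_⟩
      rw [hy_def, Int.emod_def]
      linear_combination (-m) * huv
    obtain ⟨k, hk⟩ := hdvd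
    -- m = a*b - a*x - b*y with x := b - k
    set x : ℤ := b - k with hx_def
    have hmeq : m = a * b - a * x - b * y := by rw [hx_def]; linarith [hk]
    have hnotrep : ∀ p q : ℤ, 0 ≤ p → 0 ≤ q → m = p * a + q * b → False := by
      intro p q hp hq h
      exact hrep ⟨p.toNat, q.toNat, by
        rw [Int.toNat_of_nonneg hp, Int.toNat_of_nonneg hq]; exact h⟩
    have hy1 : 1 ≤ y := by
      rcases hy0.lt_or_eq with h | h
      · linarith
      · exfalso
        have hmx : m = a * (b - x) := by rw [hmeq, ← h]; ring
        have hbx : 0 ≤ b - x := by nlinarith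
        exact hnotrep (b - x) 0 hbx le_rfl (by linarith [hmx])
    have hx1 : 1 ≤ x := by
      by_contra h
      push_neg at h
      have hxle : x ≤ 0 := by linarith
      exact hnotrep (-x) (a - y) (by linarith) (by linarith) (by rw [hmeq]; ring)
    exact ⟨(x, y), ⟨hx1, hy1, hmeq ▸ hm⟩, hmeq.symm⟩
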